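/- Let I ⊆ ℝ be an open interval and let f : ℝ → ℝ be five times differentiable on I with f''(x) > 0 for all x ∈ I. Then 9 f''(x)² f⁽⁵⁾(x) − 45 f''(x) f'''(x) f⁽⁴⁾(x) + 40 f'''(x)³ = 0 for all x ∈ I if and only if there exist constants a₀, a₁, a₂ ∈ ℝ such that a₀ + a₁x + a₂x² > 0 and f''(x) = (a₀ + a₁x + a₂x²)^{−3/2} for all x ∈ I. -/

import Mathlib

open Set

private lemma hasDerivAt_rpow_comp' {u : ℝ → ℝ} {u' x : ℝ} (hu : HasDerivAt u u' x)
    (hx : u x ≠ 0) (p : ℝ) :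
    HasDerivAt (fun y => u y ^ p) (p * u x ^ (p - 1) * u') x :=
  (Real.hasDerivAt_rpow_const (p := p) (Or.inl hx)).comp x hu

private lemma rpow_eq_pow' {t c e : ℝ} (ht : 0 ≤ t) (n : ℕ) (h : e = c * n) :
    t ^ e = (t ^ c) ^ n := by
  rw [h, ← Real.rpow_natCast (t ^ c) n, ← Real.rpow_mul ht]

private lemma eq_of_hasDerivAt_zero' {F : ℝ → ℝ} {a b x y : ℝ}
    (hF : ∀ z ∈ Ioo a b, HasDerivAt F 0 z) (hx : x ∈ Ioo a b) (hy : y ∈ Ioo a b) :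
    F x = F y := by
  refine (convex_Ioo a b).is_const_of_fderivWithin_eq_zero
    (fun z hz => ((hF z hz).differentiableAt).differentiableWithinAt) (fun z hz => ?_) hx hy
  rw [fderivWithin_of_isOpen isOpen_Ioo hz, (hF z hz).hasFDerivAt.fderiv]
  ext
  simp


/-- Lemma 6.1 (key step): for `f` five times differentiable on an open interval
with `f'' > 0`, the ODE `9 f''² f⁽⁵⁾ - 45 f'' f''' f⁽⁴⁾ + 40 f'''³ = 0` holds
on the interval iff `f'' = (a₀ + a₁ x + a₂ x²)^{-3/2}` for some constants. -/
theorem ode_iff_second_deriv_is_power_of_quadratic (a b : ℝ) (f : ℝ → ℝ)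
    (hdiff : ∀ k ≤ 4, ∀ x ∈ Ioo a b, DifferentiableAt ℝ (deriv^[k] f) x)
    (hpos : ∀ x ∈ Ioo a b, 0 < deriv^[2] f x) :
    (∀ x ∈ Ioo a b,
        9 * (deriv^[2] f x) ^ 2 * deriv^[5] f x
          - 45 * deriv^[2] f x * deriv^[3] f x * deriv^[4] f x
          + 40 * (deriv^[3] f x) ^ 3 = 0) ↔
    (∃ a₀ a₁ a₂ : ℝ, ∀ x ∈ Ioo a b,
        0 < a₀ + a₁ * x + a₂ * x ^ 2 ∧
        deriv^[2] f x = (a₀ + a₁ * x + a₂ * x ^ 2) ^ (-(3 : ℝ) / 2)) := by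
  have it3 : deriv^[3] f = deriv (deriv^[2] f) := Function.iterate_succ_apply' deriv 2 f
  have it4 : deriv^[4] f = deriv (deriv^[3] f) := Function.iterate_succ_apply' deriv 3 f
  have it5 : deriv^[5] f = deriv (deriv^[4] f) := Function.iterate_succ_apply' deriv 4 f
  constructor
  · -- forward direction
    intro hode
    rcases eq_empty_or_nonempty (Ioo a b) with he | ⟨x₀, hx₀⟩
    · exact ⟨1, 0, 0, fun x hx => absurd (he ▸ hx) (notMem_empty x)⟩
    have d0 : ∀ y ∈ Ioo a b, HasDerivAt (deriv^[2] f) (deriv^[3] f y) y := by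
      intro y hy; rw [it3]; exact (hdiff 2 (by norm_num) y hy).hasDerivAt
    have d1 : ∀ y ∈ Ioo a b, HasDerivAt (deriv^[3] f) (deriv^[4] f y) y := by
      intro y hy; rw [it4]; exact (hdiff 3 (by norm_num) y hy).hasDerivAt
    have d2 : ∀ y ∈ Ioo a b, HasDerivAt (deriv^[4] f) (deriv^[5] f y) y := by
      intro y hy; rw [it5]; exact (hdiff 4 (by norm_num) y hy).hasDerivAt
    -- h = (f'')^{-2/3}, h1 = h', h2 = h''
    have Hh : ∀ y ∈ Ioo a b,
        HasDerivAt (fun z => deriv^[2] f z ^ (-(2:ℝ)/3))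
          (-(2:ℝ)/3 * deriv^[2] f y ^ (-(5:ℝ)/3) * deriv^[3] f y) y := by
      intro y hy
      have ht := hpos y hy
      have A := hasDerivAt_rpow_comp' (d0 y hy) (ne_of_gt ht) (-(2:ℝ)/3)
      have hv : (-(2:ℝ)/3) * deriv^[2] f y ^ (-(2:ℝ)/3 - 1) * deriv^[3] f y
          = -(2:ℝ)/3 * deriv^[2] f y ^ (-(5:ℝ)/3) * deriv^[3] f y := by
        rw [show (-(2:ℝ)/3 - 1) = -(5:ℝ)/3 by norm_num]
      rwa [hv] at A
    have Hh1 : ∀ y ∈ Ioo a b,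
        HasDerivAt (fun z => -(2:ℝ)/3 * deriv^[2] f z ^ (-(5:ℝ)/3) * deriv^[3] f z)
          ((10:ℝ)/9 * deriv^[2] f y ^ (-(8:ℝ)/3) * (deriv^[3] f y)^2
            - (2:ℝ)/3 * deriv^[2] f y ^ (-(5:ℝ)/3) * deriv^[4] f y) y := by
      intro y hy
      have ht := hpos y hy
      have A := ((hasDerivAt_rpow_comp' (d0 y hy) (ne_of_gt ht) (-(5:ℝ)/3)).const_mul
          (-(2:ℝ)/3)).mul (d1 y hy)
      have hv : -(2:ℝ)/3 * ((-(5:ℝ)/3) * deriv^[2] f y ^ (-(5:ℝ)/3 - 1) * deriv^[3] f y)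
            * deriv^[3] f y
          + -(2:ℝ)/3 * deriv^[2] f y ^ (-(5:ℝ)/3) * deriv^[4] f y
          = (10:ℝ)/9 * deriv^[2] f y ^ (-(8:ℝ)/3) * (deriv^[3] f y)^2
            - (2:ℝ)/3 * deriv^[2] f y ^ (-(5:ℝ)/3) * deriv^[4] f y := by
        rw [show (-(5:ℝ)/3 - 1) = -(8:ℝ)/3 by norm_num]
        ring
      rwa [hv] at A
    have Hh2 : ∀ y ∈ Ioo a b,
        HasDerivAt (fun z => (10:ℝ)/9 * deriv^[2] f z ^ (-(8:ℝ)/3) * (deriv^[3] f z)^2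
            - (2:ℝ)/3 * deriv^[2] f z ^ (-(5:ℝ)/3) * deriv^[4] f z) 0 y := by
      intro y hy
      have ht := hpos y hy
      have hne := ne_of_gt ht
      have A := (((hasDerivAt_rpow_comp' (d0 y hy) hne (-(8:ℝ)/3)).const_mul
          ((10:ℝ)/9)).mul ((d1 y hy).pow 2)).sub
          (((hasDerivAt_rpow_comp' (d0 y hy) hne (-(5:ℝ)/3)).const_mul
          ((2:ℝ)/3)).mul (d2 y hy))
      -- the derivative value is 0
      set s := deriv^[2] f y ^ (-(1:ℝ)/3) with hs_def
      have q5 : deriv^[2] f y ^ (-(5:ℝ)/3) = s ^ 5 := rpow_eq_pow' ht.le 5 (by norm_num)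
      have q8 : deriv^[2] f y ^ (-(8:ℝ)/3) = s ^ 8 := rpow_eq_pow' ht.le 8 (by norm_num)
      have q8' : deriv^[2] f y ^ (-(5:ℝ)/3 - 1) = s ^ 8 := rpow_eq_pow' ht.le 8 (by norm_num)
      have q11 : deriv^[2] f y ^ (-(8:ℝ)/3 - 1) = s ^ 11 := rpow_eq_pow' ht.le 11 (by norm_num)
      have hs3 : s ^ 3 * deriv^[2] f y = 1 := by
        have h1 : deriv^[2] f y ^ (-(1:ℝ)) = s ^ 3 := rpow_eq_pow' ht.le 3 (by norm_num)
        rw [← h1, Real.rpow_neg_one]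
        exact inv_mul_cancel₀ hne
      have hE := hode y hy
      have hv : (10:ℝ)/9 * ((-(8:ℝ)/3) * deriv^[2] f y ^ (-(8:ℝ)/3 - 1) * deriv^[3] f y)
            * (deriv^[3] f y) ^ 2
          + (10:ℝ)/9 * deriv^[2] f y ^ (-(8:ℝ)/3)
            * ((2:ℕ) * deriv^[3] f y ^ (2-1) * deriv^[4] f y)
          - ((2:ℝ)/3 * ((-(5:ℝ)/3) * deriv^[2] f y ^ (-(5:ℝ)/3 - 1) * deriv^[3] f y)
            * deriv^[4] f y
          + (2:ℝ)/3 * deriv^[2] f y ^ (-(5:ℝ)/3) * deriv^[5] f y) = 0 := by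
        rw [q8, q8', q11, q5]
        push_cast
        linear_combination (-(2:ℝ)/27) * s^11 * hE
          + ((2:ℝ)/3 * (deriv^[5] f y) * s^5 * (s^3 * deriv^[2] f y + 1)
             - (10:ℝ)/3 * (deriv^[3] f y) * (deriv^[4] f y) * s^8) * hs3
      exact A.congr_deriv hv
    -- h2 is constant, h1 is affine, h is quadratic
    set c2 : ℝ := (10:ℝ)/9 * deriv^[2] f x₀ ^ (-(8:ℝ)/3) * (deriv^[3] f x₀)^2
        - (2:ℝ)/3 * deriv^[2] f x₀ ^ (-(5:ℝ)/3) * deriv^[4] f x₀ with hc2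
    have step1 : ∀ y ∈ Ioo a b,
        (10:ℝ)/9 * deriv^[2] f y ^ (-(8:ℝ)/3) * (deriv^[3] f y)^2
          - (2:ℝ)/3 * deriv^[2] f y ^ (-(5:ℝ)/3) * deriv^[4] f y = c2 :=
      fun y hy => eq_of_hasDerivAt_zero' Hh2 hy hx₀
    set c1 : ℝ := -(2:ℝ)/3 * deriv^[2] f x₀ ^ (-(5:ℝ)/3) * deriv^[3] f x₀ - c2 * x₀ with hc1
    have step2 : ∀ y ∈ Ioo a b,
        -(2:ℝ)/3 * deriv^[2] f y ^ (-(5:ℝ)/3) * deriv^[3] f y = c1 + c2 * y := by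
      have hF : ∀ y ∈ Ioo a b, HasDerivAt
          (fun z => -(2:ℝ)/3 * deriv^[2] f z ^ (-(5:ℝ)/3) * deriv^[3] f z - c2 * z) 0 y := by
        intro y hy
        have A := (Hh1 y hy).sub ((hasDerivAt_id y).const_mul c2)
        rw [step1 y hy] at A
        exact A.congr_deriv (by simp)
      intro y hy
      have := eq_of_hasDerivAt_zero' hF hy hx₀
      linarith [this]
    set c0 : ℝ := deriv^[2] f x₀ ^ (-(2:ℝ)/3) - c1 * x₀ - c2/2 * x₀^2 with hc0
    have step3 : ∀ y ∈ Ioo a b,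
        deriv^[2] f y ^ (-(2:ℝ)/3) = c0 + c1 * y + c2/2 * y^2 := by
      have hF : ∀ y ∈ Ioo a b, HasDerivAt
          (fun z => deriv^[2] f z ^ (-(2:ℝ)/3) - c1 * z - c2/2 * z^2) 0 y := by
        intro y hy
        have A := ((Hh y hy).sub ((hasDerivAt_id y).const_mul c1)).sub
          ((hasDerivAt_pow 2 y).const_mul (c2/2))
        rw [step2 y hy] at A
        have hv : c1 + c2 * y - c1 * 1 - c2/2 * ((2:ℕ) * y ^ (2-1)) = 0 := by
          push_cast; ring
        rwa [hv] at A
      intro y hy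
      have := eq_of_hasDerivAt_zero' hF hy hx₀
      linarith [this]
    refine ⟨c0, c1, c2/2, fun x hx => ?_⟩
    have hx3 := step3 x hx
    have hpos' : (0:ℝ) < deriv^[2] f x ^ (-(2:ℝ)/3) :=
      Real.rpow_pos_of_pos (hpos x hx) _
    constructor
    · rw [← hx3]; exact hpos'
    · rw [← hx3, ← Real.rpow_mul (hpos x hx).le]
      norm_num
  · -- backward direction
    rintro ⟨a₀, a₁, a₂, hq⟩ x hx
    have hQd : ∀ y : ℝ, HasDerivAt (fun z => a₀ + a₁ * z + a₂ * z ^ 2) (a₁ + 2*a₂*y) y := by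
      intro y
      have h1 := (hasDerivAt_id y).const_mul a₁
      have h2 := (hasDerivAt_pow 2 y).const_mul a₂
      have := ((hasDerivAt_const y a₀).add h1).add h2
      have hv : 0 + a₁ * 1 + a₂ * ((2:ℕ) * y ^ (2-1)) = a₁ + 2*a₂*y := by push_cast; ring
      rwa [hv] at this
    have hL : ∀ y : ℝ, HasDerivAt (fun z => a₁ + 2*a₂*z) (2*a₂) y := by
      intro y
      have := ((hasDerivAt_id y).const_mul (2*a₂)).const_add a₁
      simpa using this
    -- third derivative
    have h3eq : ∀ y ∈ Ioo a b, deriv^[3] f y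
        = -(3:ℝ)/2 * (a₀ + a₁ * y + a₂ * y ^ 2) ^ (-(5:ℝ)/2) * (a₁ + 2*a₂*y) := by
      intro y hy
      have hQ0 := (hq y hy).1
      have hd := hasDerivAt_rpow_comp' (hQd y) (ne_of_gt hQ0) (-(3:ℝ)/2)
      have heq : deriv^[2] f =ᶠ[nhds y] fun z => (a₀ + a₁ * z + a₂ * z ^ 2) ^ (-(3:ℝ)/2) :=
        Filter.eventuallyEq_of_mem (Ioo_mem_nhds hy.1 hy.2) (fun z hz => (hq z hz).2)
      rw [it3, heq.deriv_eq, hd.deriv, show (-(3:ℝ)/2 - 1) = -(5:ℝ)/2 by norm_num]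
    -- fourth derivative
    have h4eq : ∀ y ∈ Ioo a b, deriv^[4] f y
        = (15:ℝ)/4 * (a₀ + a₁ * y + a₂ * y ^ 2) ^ (-(7:ℝ)/2) * (a₁ + 2*a₂*y)^2
          - 3*a₂ * (a₀ + a₁ * y + a₂ * y ^ 2) ^ (-(5:ℝ)/2) := by
      intro y hy
      have hQ0 := (hq y hy).1
      have hd := ((hasDerivAt_rpow_comp' (hQd y) (ne_of_gt hQ0) (-(5:ℝ)/2)).const_mul
          (-(3:ℝ)/2)).mul (hL y)
      have heq : deriv^[3] f =ᶠ[nhds y]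
          fun z => -(3:ℝ)/2 * (a₀ + a₁ * z + a₂ * z ^ 2) ^ (-(5:ℝ)/2) * (a₁ + 2*a₂*z) :=
        Filter.eventuallyEq_of_mem (Ioo_mem_nhds hy.1 hy.2) (fun z hz => h3eq z hz)
      rw [it4, heq.deriv_eq, (show HasDerivAt
          (fun z => -(3:ℝ)/2 * (a₀ + a₁ * z + a₂ * z ^ 2) ^ (-(5:ℝ)/2) * (a₁ + 2*a₂*z)) _ y
          from hd).deriv, show (-(5:ℝ)/2 - 1) = -(7:ℝ)/2 by norm_num]
      ring
    -- fifth derivative (only needed at x)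
    have hQ0 := (hq x hx).1
    have hd5 := (((hasDerivAt_rpow_comp' (hQd x) (ne_of_gt hQ0) (-(7:ℝ)/2)).const_mul
        ((15:ℝ)/4)).mul ((hL x).pow 2)).sub
        ((hasDerivAt_rpow_comp' (hQd x) (ne_of_gt hQ0) (-(5:ℝ)/2)).const_mul (3*a₂))
    have heq5 : deriv^[4] f =ᶠ[nhds x]
        fun z => (15:ℝ)/4 * (a₀ + a₁ * z + a₂ * z ^ 2) ^ (-(7:ℝ)/2) * (a₁ + 2*a₂*z)^2
          - 3*a₂ * (a₀ + a₁ * z + a₂ * z ^ 2) ^ (-(5:ℝ)/2) :=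
      Filter.eventuallyEq_of_mem (Ioo_mem_nhds hx.1 hx.2) (fun z hz => h4eq z hz)
    have h5eq : deriv^[5] f x
        = ((15:ℝ)/4 * ((-(7:ℝ)/2) * (a₀ + a₁ * x + a₂ * x ^ 2) ^ (-(7:ℝ)/2 - 1)
            * (a₁ + 2*a₂*x))) * (a₁ + 2*a₂*x) ^ 2
          + (15:ℝ)/4 * (a₀ + a₁ * x + a₂ * x ^ 2) ^ (-(7:ℝ)/2)
            * ((2:ℕ) * (a₁ + 2*a₂*x) ^ (2-1) * (2*a₂))
          - 3*a₂ * ((-(5:ℝ)/2) * (a₀ + a₁ * x + a₂ * x ^ 2) ^ (-(5:ℝ)/2 - 1)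
            * (a₁ + 2*a₂*x)) := by
      rw [it5, heq5.deriv_eq]
      exact hd5.deriv
    -- final computation
    set r := (a₀ + a₁ * x + a₂ * x ^ 2) ^ (-(1:ℝ)/2) with hr
    have p3 : (a₀ + a₁ * x + a₂ * x ^ 2) ^ (-(3:ℝ)/2) = r ^ 3 :=
      rpow_eq_pow' hQ0.le 3 (by norm_num)
    have p5 : (a₀ + a₁ * x + a₂ * x ^ 2) ^ (-(5:ℝ)/2) = r ^ 5 :=
      rpow_eq_pow' hQ0.le 5 (by norm_num)
    have p7 : (a₀ + a₁ * x + a₂ * x ^ 2) ^ (-(7:ℝ)/2) = r ^ 7 :=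
      rpow_eq_pow' hQ0.le 7 (by norm_num)
    have p7' : (a₀ + a₁ * x + a₂ * x ^ 2) ^ (-(5:ℝ)/2 - 1) = r ^ 7 :=
      rpow_eq_pow' hQ0.le 7 (by norm_num)
    have p9 : (a₀ + a₁ * x + a₂ * x ^ 2) ^ (-(7:ℝ)/2 - 1) = r ^ 9 :=
      rpow_eq_pow' hQ0.le 9 (by norm_num)
    rw [h3eq x hx, h4eq x hx, h5eq, (hq x hx).2, p3, p5, p7, p7', p9]
    push_cast
    ring
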